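/- Let R be a 2-torsion free unital ring and n ≥ 2. Then every Jordan derivation of the trivial extension T(Mₙ(R), Mₙ(R)) into itself is a derivation. -/

import Mathlib

section General
variable {A : Type*} [Ring A]

/-- The Jordan defect. -/
def jB (Δ : A → A) (x y : A) : A := Δ (x * y) - Δ x * y - x * Δ y

variable {Δ : A → A}

lemma D0 (hadd : ∀ x y, Δ (x + y) = Δ x + Δ y) : Δ 0 = 0 := by
  have h := hadd 0 0
  rw [add_zero] at h
  exact (left_eq_add.mp h)

lemma B0r (hadd : ∀ x y, Δ (x + y) = Δ x + Δ y) (x : A) : jB Δ x 0 = 0 := by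
  simp [jB, D0 hadd]

lemma B0l (hadd : ∀ x y, Δ (x + y) = Δ x + Δ y) (x : A) : jB Δ 0 x = 0 := by
  simp [jB, D0 hadd]

lemma Baddr (hadd : ∀ x y, Δ (x + y) = Δ x + Δ y) (x y z : A) :
    jB Δ x (y + z) = jB Δ x y + jB Δ x z := by
  unfold jB
  rw [mul_add, hadd, hadd]
  noncomm_ring

lemma Baddl (hadd : ∀ x y, Δ (x + y) = Δ x + Δ y) (x y z : A) :
    jB Δ (x + y) z = jB Δ x z + jB Δ y z := by
  unfold jB
  rw [add_mul, hadd, hadd]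
  noncomm_ring

lemma Bskew (hadd : ∀ x y, Δ (x + y) = Δ x + Δ y)
    (hJ : ∀ x y, Δ (x * y + y * x) = Δ x * y + x * Δ y + Δ y * x + y * Δ x)
    (x y : A) : jB Δ y x = - jB Δ x y := by
  have h := hJ x y
  rw [hadd] at h
  unfold jB
  linear_combination (norm := noncomm_ring) h

lemma L1 (h2 : ∀ a : A, a + a = 0 → a = 0)
    (hadd : ∀ x y, Δ (x + y) = Δ x + Δ y)
    (hJ : ∀ x y, Δ (x * y + y * x) = Δ x * y + x * Δ y + Δ y * x + y * Δ x)
    (x : A) : Δ (x * x) = Δ x * x + x * Δ x := by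
  have h := hJ x x
  rw [hadd] at h
  have key : (Δ (x*x) - (Δ x * x + x * Δ x)) + (Δ (x*x) - (Δ x * x + x * Δ x)) = 0 := by
    linear_combination (norm := noncomm_ring) h
  exact sub_eq_zero.mp (h2 _ key)

lemma Bxx (h2 : ∀ a : A, a + a = 0 → a = 0)
    (hadd : ∀ x y, Δ (x + y) = Δ x + Δ y)
    (hJ : ∀ x y, Δ (x * y + y * x) = Δ x * y + x * Δ y + Δ y * x + y * Δ x)
    (x : A) : jB Δ x x = 0 := by
  unfold jB
  rw [L1 h2 hadd hJ]
  abel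

lemma J2 (h2 : ∀ a : A, a + a = 0 → a = 0)
    (hadd : ∀ x y, Δ (x + y) = Δ x + Δ y)
    (hJ : ∀ x y, Δ (x * y + y * x) = Δ x * y + x * Δ y + Δ y * x + y * Δ x)
    (x y : A) : Δ (x * y * x) = Δ x * y * x + x * Δ y * x + x * y * Δ x := by
  have ha := hJ x (x*y + y*x)
  have harg : x*(x*y+y*x) + (x*y+y*x)*x = (x*x*y + y*(x*x)) + (x*y*x + x*y*x) := by
    noncomm_ring
  rw [harg, hJ x y] at ha
  simp only [hadd] at ha
  have hb := hJ (x*x) y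
  rw [L1 h2 hadd hJ] at hb
  simp only [hadd] at hb
  have key : (Δ (x*y*x) - (Δ x * y * x + x * Δ y * x + x * y * Δ x))
      + (Δ (x*y*x) - (Δ x * y * x + x * Δ y * x + x * y * Δ x)) = 0 := by
    linear_combination (norm := noncomm_ring) ha - hb
  exact sub_eq_zero.mp (h2 _ key)

lemma J3 (h2 : ∀ a : A, a + a = 0 → a = 0)
    (hadd : ∀ x y, Δ (x + y) = Δ x + Δ y)
    (hJ : ∀ x y, Δ (x * y + y * x) = Δ x * y + x * Δ y + Δ y * x + y * Δ x)
    (x y z : A) : Δ (x*y*z) + Δ (z*y*x)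
      = Δ x * y * z + x * Δ y * z + x * y * Δ z
      + Δ z * y * x + z * Δ y * x + z * y * Δ x := by
  have h1 := J2 h2 hadd hJ (x+z) y
  have harg : (x+z)*y*(x+z) = (x*y*x + z*y*z) + (x*y*z + z*y*x) := by noncomm_ring
  rw [harg] at h1
  simp only [hadd] at h1
  have hx := J2 h2 hadd hJ x y
  have hz := J2 h2 hadd hJ z y
  linear_combination (norm := noncomm_ring) h1 - hx - hz

lemma star1 (h2 : ∀ a : A, a + a = 0 → a = 0)
    (hadd : ∀ x y, Δ (x + y) = Δ x + Δ y)
    (hJ : ∀ x y, Δ (x * y + y * x) = Δ x * y + x * Δ y + Δ y * x + y * Δ x)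
    (x y z : A) :
    jB Δ x (y*z) + x * jB Δ y z + jB Δ z (y*x) + z * jB Δ y x = 0 := by
  have h3 := J3 h2 hadd hJ x y z
  unfold jB
  linear_combination (norm := noncomm_ring) h3

lemma star2 (h2 : ∀ a : A, a + a = 0 → a = 0)
    (hadd : ∀ x y, Δ (x + y) = Δ x + Δ y)
    (hJ : ∀ x y, Δ (x * y + y * x) = Δ x * y + x * Δ y + Δ y * x + y * Δ x)
    (x y z : A) :
    jB Δ (x*y) z + jB Δ x y * z + jB Δ (z*y) x + jB Δ z y * x = 0 := by
  have h3 := J3 h2 hadd hJ x y z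
  unfold jB
  linear_combination (norm := noncomm_ring) h3

lemma C1 (h2 : ∀ a : A, a + a = 0 → a = 0)
    (hadd : ∀ x y, Δ (x + y) = Δ x + Δ y)
    (hJ : ∀ x y, Δ (x * y + y * x) = Δ x * y + x * Δ y + Δ y * x + y * Δ x)
    (x y z : A) :
    jB Δ x (y*z) = jB Δ (y*x) z - x * jB Δ y z + z * jB Δ x y := by
  have h := star1 h2 hadd hJ x y z
  rw [Bskew hadd hJ (y*x) z, Bskew hadd hJ x y] at h
  linear_combination (norm := noncomm_ring) h

lemma C2 (h2 : ∀ a : A, a + a = 0 → a = 0)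
    (hadd : ∀ x y, Δ (x + y) = Δ x + Δ y)
    (hJ : ∀ x y, Δ (x * y + y * x) = Δ x * y + x * Δ y + Δ y * x + y * Δ x)
    (x y z : A) :
    jB Δ x (z*y) = jB Δ (x*y) z - jB Δ y z * x + jB Δ x y * z := by
  have h := star2 h2 hadd hJ x y z
  rw [Bskew hadd hJ x (z*y), Bskew hadd hJ y z] at h
  linear_combination (norm := noncomm_ring) -h

lemma Cl (h2 : ∀ a : A, a + a = 0 → a = 0)
    (hadd : ∀ x y, Δ (x + y) = Δ x + Δ y)
    (hJ : ∀ x y, Δ (x * y + y * x) = Δ x * y + x * Δ y + Δ y * x + y * Δ x)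
    (x y : A) : jB Δ x (x*y) = jB Δ x y * x := by
  have h := star2 h2 hadd hJ x y x
  have key : (jB Δ (x*y) x + jB Δ x y * x) + (jB Δ (x*y) x + jB Δ x y * x) = 0 := by
    linear_combination (norm := noncomm_ring) h
  have h4 := h2 _ key
  have hs := Bskew hadd hJ x (x*y)
  linear_combination (norm := noncomm_ring) hs - h4

lemma Cr (h2 : ∀ a : A, a + a = 0 → a = 0)
    (hadd : ∀ x y, Δ (x + y) = Δ x + Δ y)
    (hJ : ∀ x y, Δ (x * y + y * x) = Δ x * y + x * Δ y + Δ y * x + y * Δ x)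
    (x y : A) : jB Δ x (y*x) = x * jB Δ x y := by
  have h := star1 h2 hadd hJ x y x
  have key : (jB Δ x (y*x) + x * jB Δ y x) + (jB Δ x (y*x) + x * jB Δ y x) = 0 := by
    linear_combination (norm := noncomm_ring) h
  have h4 := h2 _ key
  rw [Bskew hadd hJ x y] at h4
  linear_combination (norm := noncomm_ring) h4

end General
theorem jordan_matrix_units {A : Type*} [Ring A]
    (h2 : ∀ a : A, a + a = 0 → a = 0)
    {n : ℕ} (hn : 2 ≤ n) (E : Fin n → Fin n → A)
    (hmul : ∀ i j k l, E i j * E k l = if j = k then E i l else 0)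
    (hone : ∑ i, E i i = 1)
    {Δ : A → A} (hadd : ∀ x y, Δ (x + y) = Δ x + Δ y)
    (hJ : ∀ x y, Δ (x * y + y * x) = Δ x * y + x * Δ y + Δ y * x + y * Δ x) :
    ∀ x y, Δ (x * y) = Δ x * y + x * Δ y := by
  have hEs : ∀ i j l, E i j * E j l = E i l := fun i j l => by rw [hmul]; simp
  have hEne : ∀ {i j k l}, j ≠ k → E i j * E k l = 0 := fun h => by rw [hmul]; simp [h]
  have hidem : ∀ i, E i i * E i i = E i i := fun i => hEs i i i
  -- idempotent lemmas
  have i1 : ∀ e y : A, e*e = e → jB Δ e (e*y) = jB Δ e y - e * jB Δ e y := by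
    intro e y he
    have h := C1 h2 hadd hJ e e y
    rw [he, Bxx h2 hadd hJ e, mul_zero, add_zero] at h
    exact h
  have i2 : ∀ e y : A, e*e = e → jB Δ e (y*e) = e * jB Δ e y := by
    intro e y he
    have h := C1 h2 hadd hJ e y e
    rw [Bskew hadd hJ e (y*e), Bskew hadd hJ e y] at h
    have key : (jB Δ e (y*e) - e * jB Δ e y) + (jB Δ e (y*e) - e * jB Δ e y) = 0 := by
      linear_combination (norm := noncomm_ring) h
    exact sub_eq_zero.mp (h2 _ key)
  have i3 : ∀ e y : A, e*e = e → jB Δ e (e*y*e) = 0 := by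
    intro e y he
    have h := i2 e (e*y) he
    rw [i1 e y he] at h
    rw [h, mul_sub, ← mul_assoc, he, sub_self]
  have i4 : ∀ e y : A, e*e = e → e*y = 0 → y*e = 0 → jB Δ e y = 0 := by
    intro e y he hey hye
    have ha := i2 e y he
    rw [hye, B0r hadd] at ha
    have hb := i1 e y he
    rw [hey, B0r hadd, ← ha, sub_zero] at hb
    exact hb.symm
  -- step 2 : vanishing of jB (E k k) m, jB (E l l) m for m in the (k,l) Peirce component
  have step2 : ∀ k l : Fin n, k ≠ l → ∀ m, E k k * m = m → m * E l l = m →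
      jB Δ (E k k) m = 0 ∧ jB Δ (E l l) m = 0 := by
    intro k l hkl
    have hlm : ∀ m, E k k * m = m → E l l * m = 0 := by
      intro m h1; rw [← h1, ← mul_assoc, hEne hkl.symm, zero_mul]
    have hsumB : ∀ m, E k k * m = m → m * E l l = m →
        jB Δ (E k k) m + jB Δ (E l l) m = 0 := by
      intro m hm1 hm2
      have hge : (E k k + E l l) * (E k k + E l l) = E k k + E l l := by
        rw [add_mul, mul_add, mul_add, hidem k, hidem l, hEne hkl, hEne hkl.symm,
          add_zero, zero_add]
      have hml : m * E k k = 0 := by rw [← hm2, mul_assoc, hEne hkl.symm, mul_zero]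
      have hleft : (E k k + E l l) * m = m := by rw [add_mul, hm1, hlm m hm1, add_zero]
      have harg : (E k k + E l l) * m * (E k k + E l l) = m := by
        rw [hleft, mul_add, hml, hm2, zero_add]
      have h := i3 (E k k + E l l) m hge
      rw [harg, Baddl hadd] at h
      exact h
    have hb1 : ∀ m, m * E l l = m → E l l * jB Δ (E l l) m = jB Δ (E l l) m := by
      intro m hm2
      have h := i2 (E l l) m (hidem l)
      rw [hm2] at h
      exact h.symm
    have hβl : ∀ m, E k k * m = m → m * E l l = m →
        E l l * jB Δ (E k k) m = jB Δ (E k k) m := by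
      intro m hm1 hm2
      have hmm : jB Δ (E k k) m = - jB Δ (E l l) m :=
        eq_neg_of_add_eq_zero_left (hsumB m hm1 hm2)
      rw [hmm, mul_neg, hb1 m hm2]
    have hd : ∀ m, E k k * m = m → m * E l l = m → m * jB Δ (E k k) m = 0 := by
      intro m hm1 hm2
      have h := C1 h2 hadd hJ m (E l l) m
      rw [hlm m hm1, B0r hadd, B0l hadd, Bskew hadd hJ (E l l) m] at h
      have he' : jB Δ (E l l) m = - jB Δ (E k k) m :=
        eq_neg_of_add_eq_zero_right (hsumB m hm1 hm2)
      rw [he'] at h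
      have key : m * jB Δ (E k k) m + m * jB Δ (E k k) m = 0 := by
        linear_combination (norm := noncomm_ring) -h
      exact h2 _ key
    have hEklm : E k k * E k l = E k l := hEs k k l
    have hEkll : E k l * E l l = E k l := hEs k l l
    have hβEkl : jB Δ (E k k) (E k l) = 0 := by
      have h1 := hd (E k l) hEklm hEkll
      have h2' := hβl (E k l) hEklm hEkll
      calc jB Δ (E k k) (E k l) = E l l * jB Δ (E k k) (E k l) := h2'.symm
      _ = E l k * (E k l * jB Δ (E k k) (E k l)) := by rw [← mul_assoc, hEs l k l]
      _ = 0 := by rw [h1, mul_zero]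
    intro m hm1 hm2
    have hpol : E k l * jB Δ (E k k) m = 0 := by
      have hm1' : E k k * (m + E k l) = m + E k l := by rw [mul_add, hm1, hEklm]
      have hm2' : (m + E k l) * E l l = m + E k l := by rw [add_mul, hm2, hEkll]
      have h := hd (m + E k l) hm1' hm2'
      rw [Baddr hadd, hβEkl, add_zero, add_mul, hd m hm1 hm2, zero_add] at h
      exact h
    have hkk : jB Δ (E k k) m = 0 := by
      calc jB Δ (E k k) m = E l l * jB Δ (E k k) m := (hβl m hm1 hm2).symm
      _ = E l k * (E k l * jB Δ (E k k) m) := by rw [← mul_assoc, hEs l k l]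
      _ = 0 := by rw [hpol, mul_zero]
    refine ⟨hkk, ?_⟩
    have hs := hsumB m hm1 hm2
    rw [hkk, zero_add] at hs
    exact hs
  -- diagonal idempotents kill everything
  have stepE : ∀ (r k l : Fin n), k ≠ l → ∀ m, E k k * m = m → m * E l l = m →
      jB Δ (E r r) m = 0 := by
    intro r k l hkl m hm1 hm2
    by_cases hrk : r = k
    · subst hrk; exact (step2 r l hkl m hm1 hm2).1
    by_cases hrl : r = l
    · subst hrl; exact (step2 k r hkl m hm1 hm2).2
    · refine i4 (E r r) m (hidem r) ?_ ?_
      · rw [← hm1, ← mul_assoc, hEne hrk, zero_mul]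
      · rw [← hm2, mul_assoc, hEne (fun h => hrl h.symm), mul_zero]
  have stepDiagE : ∀ (r k : Fin n) m, E k k * m = m → m * E k k = m →
      jB Δ (E r r) m = 0 := by
    intro r k m hm1 hm2
    by_cases hrk : r = k
    · subst hrk
      have h := i3 (E r r) m (hidem r)
      rw [show E r r * m * E r r = m by rw [hm1, hm2]] at h
      exact h
    · refine i4 (E r r) m (hidem r) ?_ ?_
      · rw [← hm1, ← mul_assoc, hEne hrk, zero_mul]
      · rw [← hm2, mul_assoc, hEne (fun h => hrk h.symm), mul_zero]
  -- sum machinery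
  have Bsumr : ∀ (a : A) (g : Fin n → A),
      jB Δ a (∑ i, g i) = ∑ i, jB Δ a (g i) := fun a g =>
    map_sum (AddMonoidHom.mk' (fun y => jB Δ a y) (Baddr hadd a)) g Finset.univ
  have Bsuml : ∀ (a : A) (g : Fin n → A),
      jB Δ (∑ i, g i) a = ∑ i, jB Δ (g i) a := fun a g =>
    map_sum (AddMonoidHom.mk' (fun y => jB Δ y a) (fun u v => Baddl hadd u v a)) g Finset.univ
  have hdecomp : ∀ x : A, x = ∑ i : Fin n, ∑ j : Fin n, E i i * x * E j j := by
    intro x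
    calc x = (∑ i, E i i) * x * (∑ j, E j j) := by rw [hone, one_mul, mul_one]
    _ = ∑ i : Fin n, ∑ j : Fin n, E i i * x * E j j := by
        rw [Finset.sum_mul, Finset.sum_mul]
        exact Finset.sum_congr rfl fun i _ => by rw [Finset.mul_sum]
  have hm1gen : ∀ (i j : Fin n) (x : A), E i i * (E i i * x * E j j) = E i i * x * E j j := by
    intro i j x; rw [← mul_assoc, ← mul_assoc, hidem i]
  have hm2gen : ∀ (i j : Fin n) (x : A), (E i i * x * E j j) * E j j = E i i * x * E j j := by
    intro i j x; rw [mul_assoc, hidem j]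
  have step4 : ∀ (r : Fin n) (x : A), jB Δ (E r r) x = 0 := by
    intro r x
    conv_lhs => rw [hdecomp x]
    rw [Bsumr]
    refine Finset.sum_eq_zero fun i _ => ?_
    rw [Bsumr]
    refine Finset.sum_eq_zero fun j _ => ?_
    by_cases hij : i = j
    · subst hij; exact stepDiagE r i _ (hm1gen i i x) (hm2gen i i x)
    · exact stepE r i j hij _ (hm1gen i j x) (hm2gen i j x)
  have step5 : ∀ (x : A) (r : Fin n), jB Δ x (E r r) = 0 := by
    intro x r
    rw [Bskew hadd hJ (E r r) x, step4 r x, neg_zero]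
  have step6a : ∀ (k l : Fin n), k ≠ l → ∀ m, E k k * m = m → m * E l l = m →
      ∀ (r : Fin n) (x : A), r ≠ k → jB Δ (E r r * x) m = 0 := by
    intro k l hkl m hm1 hm2 r x hrk
    have h := C1 h2 hadd hJ x (E r r) m
    have h0 : E r r * m = 0 := by rw [← hm1, ← mul_assoc, hEne hrk, zero_mul]
    rw [h0, B0r hadd, step4 r m, step5 x r, mul_zero, mul_zero, sub_zero, add_zero] at h
    exact h.symm
  have step6b : ∀ (k l : Fin n), k ≠ l → ∀ m, E k k * m = m → m * E l l = m →
      ∀ (r : Fin n) (x : A), r ≠ l → jB Δ (x * E r r) m = 0 := by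
    intro k l hkl m hm1 hm2 r x hrl
    have h := C2 h2 hadd hJ x (E r r) m
    have h0 : m * E r r = 0 := by rw [← hm2, mul_assoc, hEne (fun h => hrl h.symm), mul_zero]
    rw [h0, B0r hadd, step4 r m, step5 x r, zero_mul, zero_mul, sub_zero, add_zero] at h
    exact h.symm
  have step6d : ∀ (k l : Fin n), k ≠ l → ∀ w, E k k * w = w → w * E l l = w →
      jB Δ (E k l) w = 0 := by
    intro k l hkl w hw1 hw2
    have heq : E k l * (E l k * w) = w := by rw [← mul_assoc, hEs k l k, hw1]
    have h := Cl h2 hadd hJ (E k l) (E l k * w)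
    rw [heq] at h
    have hz : jB Δ (E k l) (E l k * w) = 0 := by
      rw [Bskew hadd hJ (E l k * w) (E k l)]
      have hrw : E l l * (E l k * w) = E l k * w := by rw [← mul_assoc, hEs l l k]
      have h6 := step6a k l hkl (E k l) (hEs k k l) (hEs k l l) l (E l k * w) hkl.symm
      rw [hrw] at h6
      rw [h6, neg_zero]
    rw [hz, zero_mul] at h
    exact h
  have step6f : ∀ (k l : Fin n), k ≠ l → ∀ u m, E k k * u = u → u * E l l = u →
      E k k * m = m → m * E l l = m → jB Δ m u = 0 := by
    intro k l hkl u m hu1 hu2 hm1 hm2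
    have hv'1 : E k k * (u * E l k) = u * E l k := by rw [← mul_assoc, hu1]
    have hv'2 : (u * E l k) * E k k = u * E l k := by rw [mul_assoc, hEs l k k]
    have hu' : (u * E l k) * E k l = u := by rw [mul_assoc, hEs l k l, hu2]
    have h := C1 h2 hadd hJ m (u * E l k) (E k l)
    rw [hu'] at h
    have hw1 : E k k * ((u * E l k) * m) = (u * E l k) * m := by rw [← mul_assoc, hv'1]
    have hw2 : ((u * E l k) * m) * E l l = (u * E l k) * m := by rw [mul_assoc, hm2]
    have t1 : jB Δ ((u * E l k) * m) (E k l) = 0 := by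
      rw [Bskew hadd hJ (E k l) ((u * E l k) * m), step6d k l hkl _ hw1 hw2, neg_zero]
    have t2 : jB Δ (u * E l k) (E k l) = 0 := by
      have h' := step6b k l hkl (E k l) (hEs k k l) (hEs k l l) k (u * E l k) hkl
      rw [hv'2] at h'
      exact h'
    have t3 : jB Δ m (u * E l k) = 0 := by
      have h' := step6b k l hkl m hm1 hm2 k (u * E l k) hkl
      rw [hv'2] at h'
      rw [Bskew hadd hJ (u * E l k) m, h', neg_zero]
    rw [t1, t2, t3, mul_zero, mul_zero, sub_zero, add_zero] at h
    exact h
  have step7 : ∀ (k l : Fin n), k ≠ l → ∀ m, E k k * m = m → m * E l l = m →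
      ∀ x, jB Δ x m = 0 := by
    intro k l hkl m hm1 hm2 x
    conv_lhs => rw [hdecomp x]
    rw [Bsuml]
    refine Finset.sum_eq_zero fun i _ => ?_
    rw [Bsuml]
    refine Finset.sum_eq_zero fun j _ => ?_
    by_cases hik : i = k
    · subst hik
      by_cases hjl : j = l
      · subst hjl
        exact step6f i j hkl m (E i i * x * E j j) hm1 hm2 (hm1gen i j x) (hm2gen i j x)
      · exact step6b i l hkl m hm1 hm2 j (E i i * x) hjl
    · have h := step6a k l hkl m hm1 hm2 i (x * E j j) hik
      rw [← mul_assoc] at h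
      exact h
  have step8 : ∀ (k : Fin n) (v : A), E k k * v = v → v * E k k = v →
      ∀ x, jB Δ x v = 0 := by
    intro k v hv1 hv2 x
    have : Nontrivial (Fin n) := Fin.nontrivial_iff_two_le.mpr hn
    obtain ⟨l, hlk⟩ := exists_ne k
    have hz1 : E l l * (E l k * v) = E l k * v := by rw [← mul_assoc, hEs l l k]
    have hz2 : (E l k * v) * E k k = E l k * v := by rw [mul_assoc, hv2]
    have hzv : E k l * (E l k * v) = v := by rw [← mul_assoc, hEs k l k, hv1]
    have h := C1 h2 hadd hJ x (E k l) (E l k * v)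
    rw [hzv, step7 l k hlk _ hz1 hz2 (E k l * x), step7 l k hlk _ hz1 hz2 (E k l),
      step7 k l (Ne.symm hlk) (E k l) (hEs k k l) (hEs k l l) x,
      mul_zero, mul_zero, sub_zero, add_zero] at h
    exact h
  have final : ∀ x y : A, jB Δ x y = 0 := by
    intro x y
    conv_lhs => rw [hdecomp y]
    rw [Bsumr]
    refine Finset.sum_eq_zero fun i _ => ?_
    rw [Bsumr]
    refine Finset.sum_eq_zero fun j _ => ?_
    by_cases hij : i = j
    · subst hij; exact step8 i _ (hm1gen i i y) (hm2gen i i y) x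
    · exact step7 i j hij _ (hm1gen i j y) (hm2gen i j y) x
  intro x y
  have h := final x y
  unfold jB at h
  have := sub_eq_zero.mp h
  linear_combination (norm := noncomm_ring) h
theorem stmt17 (R : Type*) [Ring R] (htf : ∀ r : R, r + r = 0 → r = 0)
    (n : ℕ) (hn : 2 ≤ n) :
    ∀ Δ : TrivSqZeroExt (Matrix (Fin n) (Fin n) R) (Matrix (Fin n) (Fin n) R) →
        TrivSqZeroExt (Matrix (Fin n) (Fin n) R) (Matrix (Fin n) (Fin n) R),
      (∀ x y, Δ (x + y) = Δ x + Δ y) →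
      (∀ x y, Δ (x * y + y * x) = Δ x * y + x * Δ y + Δ y * x + y * Δ x) →
      ∀ x y, Δ (x * y) = Δ x * y + x * Δ y := by
  intro Δ hadd hJ
  set M := Matrix (Fin n) (Fin n) R with hM
  have htfM : ∀ X : M, X + X = 0 → X = 0 := by
    intro X hX
    ext i j
    apply htf
    have := congrFun (congrFun hX i) j
    exact this
  have h2A : ∀ a : TrivSqZeroExt M M, a + a = 0 → a = 0 := by
    intro a ha
    have hf : a.fst + a.fst = 0 := by
      have := congrArg TrivSqZeroExt.fst ha
      simpa [TrivSqZeroExt.fst_add] using this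
    have hs : a.snd + a.snd = 0 := by
      have := congrArg TrivSqZeroExt.snd ha
      simpa [TrivSqZeroExt.snd_add] using this
    refine TrivSqZeroExt.ext ?_ ?_
    · simpa using htfM _ hf
    · simpa using htfM _ hs
  have hmulE : ∀ i j k l : Fin n,
      (TrivSqZeroExt.inl (Matrix.single i j (1:R)) : TrivSqZeroExt M M) *
        TrivSqZeroExt.inl (Matrix.single k l (1:R)) =
      if j = k then TrivSqZeroExt.inl (Matrix.single i l (1:R)) else 0 := by
    intro i j k l
    rw [TrivSqZeroExt.inl_mul_inl]
    by_cases h : j = k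
    · subst h
      rw [if_pos rfl, Matrix.single_mul_single_same, one_mul]
    · rw [if_neg h, Matrix.single_mul_single_of_ne (c := (1:R)) i j k h, TrivSqZeroExt.inl_zero]
  have honeM : ∑ i : Fin n, Matrix.single i i (1:R) = (1 : M) := by
    ext a b
    rw [Matrix.sum_apply]
    by_cases hab : a = b
    · subst hab
      rw [Matrix.one_apply_eq]
      simp [Matrix.single]
    · rw [Matrix.one_apply_ne hab]
      refine Finset.sum_eq_zero fun c _ => ?_
      simp only [Matrix.single, Matrix.of_apply, ite_eq_right_iff, and_imp]
      rintro rfl rfl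
      exact absurd rfl hab
  have honeE : ∑ i : Fin n,
      (TrivSqZeroExt.inl (Matrix.single i i (1:R)) : TrivSqZeroExt M M) = 1 := by
    rw [show (fun i => (TrivSqZeroExt.inl (Matrix.single i i (1:R)) : TrivSqZeroExt M M))
        = fun i => TrivSqZeroExt.inlHom M M (Matrix.single i i (1:R)) from rfl]
    rw [← map_sum, honeM, map_one]
  exact jordan_matrix_units h2A hn
    (fun i j => TrivSqZeroExt.inl (Matrix.single i j (1:R)))
    hmulE honeE hadd hJ
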